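/- Let A be an m × n matrix with the (k,D)-RIP-p property. If 1 < p ≤ 2 then Σ_{i,j} A_{i,j}^2 ≥ n · (k/m)^{2/p - 1}; if p ≥ 2 then Σ_{i,j} A_{i,j}^2 ≤ n · D^2 · (k/m)^{2/p - 1}. -/

import Mathlib

open Finset

set_option linter.unreachableTactic false
set_option linter.unusedTactic false


lemma powmean_le {ι : Type*} (s : Finset ι) (hs : s.Nonempty) (a : ι → ℝ)
    (ha : ∀ t ∈ s, 0 ≤ a t) (q : ℝ) (hq0 : 0 < q) (hq1 : q ≤ 1) :
    ∑ t ∈ s, a t ^ q ≤ (s.card : ℝ) ^ (1 - q) * (∑ t ∈ s, a t) ^ q := by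
  set N : ℝ := (s.card : ℝ) with hN
  have hN0 : 0 < N := by rw [hN]; exact_mod_cast hs.card_pos
  have key := Real.arith_mean_le_rpow_mean s (fun _ => 1 / N) (fun t => a t ^ q)
    (fun i _ => by positivity) (by simp [Finset.sum_const]; field_simp; exact hN.symm)
    (fun i hi => Real.rpow_nonneg (ha i hi) q) (p := 1 / q)
    (by rw [le_div_iff₀ hq0]; simpa using hq1)
  have h1 : ∀ i ∈ s, (1/N) * (a i ^ q) ^ (1 / q) = (1/N) * a i := by
    intro i hi
    rw [← Real.rpow_mul (ha i hi), mul_one_div_cancel hq0.ne', Real.rpow_one]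
  rw [Finset.sum_congr rfl h1, one_div_one_div] at key
  have hsum : 0 ≤ ∑ t ∈ s, a t := Finset.sum_nonneg ha
  have key2 : (1 / N) * ∑ t ∈ s, a t ^ q ≤ (1/N) ^ q * (∑ t ∈ s, a t) ^ q := by
    calc (1 / N) * ∑ t ∈ s, a t ^ q = ∑ t ∈ s, (1/N) * a t ^ q := by rw [Finset.mul_sum]
    _ ≤ (∑ t ∈ s, (1/N) * a t) ^ q := key
    _ = ((1/N) * ∑ t ∈ s, a t) ^ q := by rw [Finset.mul_sum]
    _ = (1/N) ^ q * (∑ t ∈ s, a t) ^ q := Real.mul_rpow (by positivity) hsum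
  have hfin : N ^ (1 - q) = N * (1/N) ^ q := by
    rw [Real.div_rpow zero_le_one hN0.le, Real.one_rpow, Real.rpow_sub hN0, Real.rpow_one]
    ring
  rw [hfin]
  calc ∑ t ∈ s, a t ^ q = N * ((1/N) * ∑ t ∈ s, a t ^ q) := by field_simp
  _ ≤ N * ((1/N) ^ q * (∑ t ∈ s, a t) ^ q) := mul_le_mul_of_nonneg_left key2 hN0.le
  _ = N * (1/N) ^ q * (∑ t ∈ s, a t) ^ q := by ring

lemma powmean_ge {ι : Type*} (s : Finset ι) (hs : s.Nonempty) (a : ι → ℝ)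
    (ha : ∀ t ∈ s, 0 ≤ a t) (q : ℝ) (hq : 1 ≤ q) :
    (s.card : ℝ) ^ (1 - q) * (∑ t ∈ s, a t) ^ q ≤ ∑ t ∈ s, a t ^ q := by
  set N : ℝ := (s.card : ℝ) with hN
  have hN0 : 0 < N := by rw [hN]; exact_mod_cast hs.card_pos
  have key := Real.rpow_arith_mean_le_arith_mean_rpow s (fun _ => 1 / N) a
    (fun i _ => by positivity) (by simp [Finset.sum_const]; field_simp; exact hN.symm) ha hq
  have hsum : 0 ≤ ∑ t ∈ s, a t := Finset.sum_nonneg ha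
  have h2 : (∑ t ∈ s, (1/N) * a t) ^ q = (1/N)^q * (∑ t ∈ s, a t) ^ q := by
    rw [← Finset.mul_sum]; exact Real.mul_rpow (by positivity) hsum
  rw [h2] at key
  have hfin : N ^ (1 - q) = N * (1/N) ^ q := by
    rw [Real.div_rpow zero_le_one hN0.le, Real.one_rpow, Real.rpow_sub hN0, Real.rpow_one]
    ring
  rw [hfin]
  calc N * (1/N)^q * (∑ t ∈ s, a t) ^ q = N * ((1/N)^q * (∑ t ∈ s, a t) ^ q) := by ring
  _ ≤ N * (∑ t ∈ s, (1/N) * a t ^ q) := mul_le_mul_of_nonneg_left key hN0.le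
  _ = ∑ t ∈ s, a t ^ q := by rw [← Finset.mul_sum]; field_simp


noncomputable def eps {n : ℕ} (σ : Fin n → Bool) (j : Fin n) : ℝ := if σ j then 1 else -1

lemma eps_sq {n : ℕ} (σ : Fin n → Bool) (j : Fin n) : eps σ j * eps σ j = 1 := by
  unfold eps; by_cases h : σ j <;> simp [h]

lemma rad_orth {n : ℕ} (j j' : Fin n) (h : j ≠ j') :
    ∑ σ : Fin n → Bool, eps σ j * eps σ j' = 0 := by
  have hinv : Function.Involutive (fun σ : Fin n → Bool => Function.update σ j (!σ j)) := by
    intro σ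
    funext x
    by_cases hx : x = j <;> simp [Function.update_apply, hx]
  let e := Function.Involutive.toPerm _ hinv
  have hsum := Equiv.sum_comp (Function.Involutive.toPerm _ hinv) (fun σ => eps σ j * eps σ j')
  have hterm : ∀ σ : Fin n → Bool,
      eps (Function.Involutive.toPerm _ hinv σ) j * eps (Function.Involutive.toPerm _ hinv σ) j' = -(eps σ j * eps σ j') := by
    intro σ
    have h1 : eps (Function.update σ j (!σ j)) j = -(eps σ j) := by
      unfold eps; by_cases hb : σ j <;> simp [hb]
    have h2 : eps (Function.update σ j (!σ j)) j' = eps σ j' := by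
      unfold eps; simp [Function.update_apply, (Ne.symm h)]
    show eps (Function.update σ j (!σ j)) j * eps (Function.update σ j (!σ j)) j' = _
    rw [h1, h2]; ring
  rw [Finset.sum_congr rfl (fun σ _ => hterm σ), Finset.sum_neg_distrib] at hsum
  linarith

lemma rad_sq_sum {n : ℕ} (U : Finset (Fin n)) (b : Fin n → ℝ) :
    ∑ σ : Fin n → Bool, (∑ j ∈ U, b j * eps σ j) ^ 2
      = (2 ^ n : ℝ) * ∑ j ∈ U, (b j) ^ 2 := by
  have expand : ∀ σ : Fin n → Bool, (∑ j ∈ U, b j * eps σ j) ^ 2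
      = ∑ j ∈ U, ∑ j' ∈ U, (b j * b j') * (eps σ j * eps σ j') := by
    intro σ
    rw [sq, Finset.sum_mul_sum]
    apply Finset.sum_congr rfl; intro j _
    apply Finset.sum_congr rfl; intro j' _
    ring
  rw [Finset.sum_congr rfl (fun σ _ => expand σ), Finset.sum_comm]
  have swap : ∀ j ∈ U, ∑ σ : Fin n → Bool, ∑ j' ∈ U, (b j * b j') * (eps σ j * eps σ j')
      = (2^n : ℝ) * (b j)^2 := by
    intro j hj
    rw [Finset.sum_comm]
    have inner : ∀ j' ∈ U, ∑ σ : Fin n → Bool, (b j * b j') * (eps σ j * eps σ j')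
        = if j' = j then (2^n : ℝ) * (b j)^2 else 0 := by
      intro j' _
      by_cases hjj : j' = j
      · subst hjj
        simp only [if_pos rfl]
        rw [← Finset.mul_sum]
        rw [Finset.sum_congr rfl (fun σ _ => eps_sq σ j')]
        simp [Finset.card_univ]
        ring
      · rw [if_neg hjj, ← Finset.mul_sum, rad_orth j j' (Ne.symm hjj)]  -- careful order
        · ring
    rw [Finset.sum_congr rfl inner, Finset.sum_ite_eq' U j (fun _ => (2^n:ℝ) * (b j)^2), if_pos hj]
  rw [Finset.sum_congr rfl swap, ← Finset.mul_sum]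

lemma rpow_one_div_cancel {x : ℝ} (hx : 0 ≤ x) {p : ℝ} (hp : 0 < p) :
    (x ^ (1/p)) ^ p = x := by
  rw [← Real.rpow_mul hx, one_div_mul_cancel hp.ne', Real.rpow_one]

lemma rpow_cancel_one_div {x : ℝ} (hx : 0 ≤ x) {p : ℝ} (hp : 0 < p) :
    (x ^ p) ^ (1/p) = x := by
  rw [← Real.rpow_mul hx, mul_one_div_cancel hp.ne', Real.rpow_one]

lemma target_eq (k m : ℕ) (hk : 1 ≤ k) (hm : 1 ≤ m) (r : ℝ) :
    (k:ℝ) * ((k:ℝ)/(m:ℝ))^(r - 1) = (k:ℝ)^r * (m:ℝ)^(1-r) := by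
  have hk0 : (0:ℝ) < k := by exact_mod_cast hk
  have hm0 : (0:ℝ) < m := by exact_mod_cast hm
  rw [Real.div_rpow hk0.le hm0.le, Real.rpow_sub hk0, Real.rpow_sub hm0,
    Real.rpow_one, Real.rpow_one]
  have hkr : (0:ℝ) < (k:ℝ)^r := Real.rpow_pos_of_pos hk0 r
  have hmr : (0:ℝ) < (m:ℝ)^r := Real.rpow_pos_of_pos hm0 r
  have hmm : (m:ℝ)^(1-r) * (m:ℝ)^r = (m:ℝ) := by rw [← Real.rpow_add hm0]; norm_num
  field_simp
  linear_combination (-1:ℝ) * hmm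

lemma subset_bounds (m n k : ℕ) (hk : 1 ≤ k) (hm : 1 ≤ m)
    (p D : ℝ) (hp : 1 ≤ p) (hD : 1 < D)
    (A : Matrix (Fin m) (Fin n) ℝ)
    (hRIP : ∀ x : Fin n → ℝ, Set.ncard {i | x i ≠ 0} ≤ k →
      (∑ i, |x i| ^ p) ^ (1 / p) ≤ (∑ i, |A.mulVec x i| ^ p) ^ (1 / p) ∧
      (∑ i, |A.mulVec x i| ^ p) ^ (1 / p) ≤ D * (∑ i, |x i| ^ p) ^ (1 / p))
    (U : Finset (Fin n)) (hU : U.card = k) :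
    (1 < p → p ≤ 2 → (k:ℝ) * ((k:ℝ)/(m:ℝ))^(2/p - 1) ≤ ∑ i, ∑ j ∈ U, (A i j) ^ 2) ∧
    (2 ≤ p → ∑ i, ∑ j ∈ U, (A i j) ^ 2 ≤ D^2 * (k:ℝ) * ((k:ℝ)/(m:ℝ))^(2/p - 1)) := by
  have hp0 : (0:ℝ) < p := lt_of_lt_of_le one_pos hp
  have hk0 : (0:ℝ) < (k:ℝ) := by exact_mod_cast hk
  have hm0 : (0:ℝ) < (m:ℝ) := by exact_mod_cast hm
  have hD0 : (0:ℝ) ≤ D := le_of_lt (lt_trans one_pos hD)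
  set x : (Fin n → Bool) → Fin n → ℝ := fun σ j => if j ∈ U then eps σ j else 0 with hxdef
  -- support bound
  have hsupp : ∀ σ, Set.ncard {j | x σ j ≠ 0} ≤ k := by
    intro σ
    have hsub : {j | x σ j ≠ 0} ⊆ ↑U := by
      intro j hj
      by_contra h
      exact hj (if_neg h)
    calc Set.ncard {j | x σ j ≠ 0} ≤ Set.ncard (↑U : Set (Fin n)) :=
          Set.ncard_le_ncard hsub U.finite_toSet
    _ = U.card := Set.ncard_coe_finset U
    _ = k := hU
  -- norm of x
  have hxnorm : ∀ σ, ∑ j, |x σ j| ^ p = (k:ℝ) := by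
    intro σ
    have h1 : ∀ j, |x σ j| ^ p = if j ∈ U then (1:ℝ) else 0 := by
      intro j
      by_cases hj : j ∈ U
      · rw [if_pos hj]
        have : x σ j = eps σ j := if_pos hj
        rw [this]
        have : |eps σ j| = 1 := by unfold eps; by_cases hb : σ j <;> simp [hb]
        rw [this, Real.one_rpow]
      · rw [if_neg hj]
        have : x σ j = 0 := if_neg hj
        rw [this, abs_zero, Real.zero_rpow hp0.ne']
    rw [Finset.sum_congr rfl (fun j _ => h1 j), Finset.sum_ite_mem, Finset.univ_inter]
    simp [hU]
  -- mulVec formula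
  have hmul : ∀ σ i, A.mulVec (x σ) i = ∑ j ∈ U, A i j * eps σ j := by
    intro σ i
    show ∑ j, A i j * x σ j = _
    simp only [hxdef, mul_ite, mul_zero]
    rw [Finset.sum_ite_mem, Finset.univ_inter]
  -- RIP consequences
  have hSY0 : ∀ σ, (0:ℝ) ≤ ∑ i, |A.mulVec (x σ) i| ^ p :=
    fun σ => Finset.sum_nonneg fun i _ => Real.rpow_nonneg (abs_nonneg _) p
  have hlow : ∀ σ, (k:ℝ) ≤ ∑ i, |A.mulVec (x σ) i| ^ p := by
    intro σ
    have h1 := (hRIP (x σ) (hsupp σ)).1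
    rw [hxnorm σ] at h1
    have h2 := Real.rpow_le_rpow (Real.rpow_nonneg hk0.le _) h1 hp0.le
    rwa [rpow_one_div_cancel hk0.le hp0, rpow_one_div_cancel (hSY0 σ) hp0] at h2
  have hup : ∀ σ, ∑ i, |A.mulVec (x σ) i| ^ p ≤ D ^ p * (k:ℝ) := by
    intro σ
    have h1 := (hRIP (x σ) (hsupp σ)).2
    rw [hxnorm σ] at h1
    have h2 := Real.rpow_le_rpow (Real.rpow_nonneg (hSY0 σ) _) h1 hp0.le
    rwa [rpow_one_div_cancel (hSY0 σ) hp0,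
      Real.mul_rpow hD0 (Real.rpow_nonneg hk0.le _),
      rpow_one_div_cancel hk0.le hp0] at h2
  -- rewrite abs-power as square-power
  have habs : ∀ σ i, |A.mulVec (x σ) i| ^ p = ((A.mulVec (x σ) i)^2 : ℝ) ^ (p/2) := by
    intro σ i
    rw [← sq_abs, ← Real.rpow_natCast |A.mulVec (x σ) i| 2,
      ← Real.rpow_mul (abs_nonneg _)]
    congr 1
    push_cast
    ring
  -- notation
  set s : Fin m → ℝ := fun i => ∑ j ∈ U, (A i j)^2 with hsdef
  have hs0 : ∀ i, 0 ≤ s i := fun i => Finset.sum_nonneg fun j _ => sq_nonneg _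
  have hS0 : 0 ≤ ∑ i, s i := Finset.sum_nonneg fun i _ => hs0 i
  have hsq : ∀ i, ∑ σ : Fin n → Bool, (A.mulVec (x σ) i)^2 = (2^n : ℝ) * s i := by
    intro i
    calc ∑ σ : Fin n → Bool, (A.mulVec (x σ) i)^2
        = ∑ σ : Fin n → Bool, (∑ j ∈ U, A i j * eps σ j)^2 :=
          Finset.sum_congr rfl fun σ _ => by rw [hmul]
    _ = (2^n : ℝ) * ∑ j ∈ U, (A i j)^2 := rad_sq_sum U (fun j => A i j)
  have hN2 : (0:ℝ) < (2:ℝ)^n := by positivity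
  have hcardB : ((Finset.univ : Finset (Fin n → Bool)).card : ℝ) = (2:ℝ)^n := by
    simp [Finset.card_univ]
  have hmne : (Finset.univ : Finset (Fin m)).Nonempty := ⟨⟨0, hm⟩, Finset.mem_univ _⟩
  have hBne : (Finset.univ : Finset (Fin n → Bool)).Nonempty := Finset.univ_nonempty
  have hcardm : ((Finset.univ : Finset (Fin m)).card : ℝ) = (m:ℝ) := by simp
  constructor
  · -- lower bound, 1 < p ≤ 2
    intro hp1 hp2
    set q : ℝ := p/2 with hqdef
    have hq0 : 0 < q := by positivity
    have hq1 : q ≤ 1 := by rw [hqdef]; linarith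
    -- step: 2^n * k ≤ 2^n * ∑ i, s i ^ q
    have step1 : (2:ℝ)^n * (k:ℝ) ≤ ∑ i, (2:ℝ)^n * s i ^ q := by
      calc (2:ℝ)^n * (k:ℝ) = ∑ _σ : Fin n → Bool, (k:ℝ) := by
            rw [Finset.sum_const, nsmul_eq_mul, hcardB]
      _ ≤ ∑ σ : Fin n → Bool, ∑ i, |A.mulVec (x σ) i| ^ p :=
            Finset.sum_le_sum fun σ _ => hlow σ
      _ = ∑ i, ∑ σ : Fin n → Bool, ((A.mulVec (x σ) i)^2 : ℝ) ^ q := by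
            rw [Finset.sum_comm]
            exact Finset.sum_congr rfl fun i _ => Finset.sum_congr rfl fun σ _ => habs σ i
      _ ≤ ∑ i, (2:ℝ)^n * s i ^ q := by
            apply Finset.sum_le_sum
            intro i _
            calc ∑ σ : Fin n → Bool, ((A.mulVec (x σ) i)^2 : ℝ) ^ q
                ≤ ((Finset.univ : Finset (Fin n → Bool)).card : ℝ) ^ (1-q) *
                  (∑ σ : Fin n → Bool, (A.mulVec (x σ) i)^2) ^ q :=
                  powmean_le _ hBne _ (fun σ _ => sq_nonneg _) q hq0 hq1
            _ = ((2:ℝ)^n) ^ (1-q) * ((2^n:ℝ) * s i) ^ q := by rw [hcardB, hsq i]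
            _ = ((2:ℝ)^n) ^ (1-q) * (((2:ℝ)^n) ^ q * s i ^ q) := by
                  rw [Real.mul_rpow hN2.le (hs0 i)]
            _ = (2:ℝ)^n * s i ^ q := by
                  rw [← mul_assoc, ← Real.rpow_add hN2]
                  norm_num
    have step2 : (k:ℝ) ≤ ∑ i, s i ^ q := by
      rw [← Finset.mul_sum] at step1
      exact le_of_mul_le_mul_left step1 hN2
    have step3 : (k:ℝ) ≤ (m:ℝ) ^ (1-q) * (∑ i, s i) ^ q := by
      calc (k:ℝ) ≤ ∑ i, s i ^ q := step2
      _ ≤ ((Finset.univ : Finset (Fin m)).card : ℝ) ^ (1-q) * (∑ i, s i) ^ q :=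
            powmean_le _ hmne _ (fun i _ => hs0 i) q hq0 hq1
      _ = (m:ℝ) ^ (1-q) * (∑ i, s i) ^ q := by rw [hcardm]
    -- solve for ∑ s i
    have step4 : (k:ℝ) ^ (1/q) ≤ (m:ℝ) ^ ((1-q)*(1/q)) * ∑ i, s i := by
      have h5 := Real.rpow_le_rpow hk0.le step3 (le_of_lt (by positivity : (0:ℝ) < 1/q))
      rwa [Real.mul_rpow (Real.rpow_nonneg hm0.le _) (Real.rpow_nonneg hS0 _),
        ← Real.rpow_mul hm0.le, rpow_cancel_one_div hS0 hq0] at h5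
    have e1 : (1:ℝ)/q = 2/p := by rw [hqdef]; field_simp
    have e2 : ((1:ℝ)-q)*(1/q) = 2/p - 1 := by rw [hqdef]; field_simp <;> ring
    rw [e2, e1] at step4
    have final : (k:ℝ)^(2/p) * (m:ℝ)^(1-2/p) ≤ ∑ i, s i := by
      have h6 := mul_le_mul_of_nonneg_left step4
        (Real.rpow_nonneg hm0.le (1-2/p))
      calc (k:ℝ)^(2/p) * (m:ℝ)^(1-2/p) = (m:ℝ)^(1-2/p) * (k:ℝ)^(2/p) := by ring
      _ ≤ (m:ℝ)^(1-2/p) * ((m:ℝ)^(2/p-1) * ∑ i, s i) := h6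
      _ = ((m:ℝ)^(1-2/p) * (m:ℝ)^(2/p-1)) * ∑ i, s i := by ring
      _ = ∑ i, s i := by
            rw [← Real.rpow_add hm0]
            norm_num
    rw [target_eq k m hk hm (2/p)]
    exact final
  · -- upper bound, p ≥ 2
    intro hp2
    set q : ℝ := p/2 with hqdef
    have hq0 : 0 < q := by positivity
    have hq1 : 1 ≤ q := by rw [hqdef]; linarith
    have step1 : ∑ i, (2:ℝ)^n * s i ^ q ≤ (2:ℝ)^n * (D^p * (k:ℝ)) := by
      calc ∑ i, (2:ℝ)^n * s i ^ q
          ≤ ∑ i, ∑ σ : Fin n → Bool, ((A.mulVec (x σ) i)^2 : ℝ) ^ q := by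
            apply Finset.sum_le_sum
            intro i _
            calc (2:ℝ)^n * s i ^ q
                = ((2:ℝ)^n) ^ (1-q) * (((2:ℝ)^n) ^ q * s i ^ q) := by
                  rw [← mul_assoc, ← Real.rpow_add hN2]; norm_num
            _ = ((2:ℝ)^n) ^ (1-q) * ((2^n:ℝ) * s i) ^ q := by
                  rw [Real.mul_rpow hN2.le (hs0 i)]
            _ = ((Finset.univ : Finset (Fin n → Bool)).card : ℝ) ^ (1-q) *
                  (∑ σ : Fin n → Bool, (A.mulVec (x σ) i)^2) ^ q := by rw [hcardB, hsq i]
            _ ≤ ∑ σ : Fin n → Bool, ((A.mulVec (x σ) i)^2 : ℝ) ^ q :=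
                  powmean_ge _ hBne _ (fun σ _ => sq_nonneg _) q hq1
      _ = ∑ σ : Fin n → Bool, ∑ i, |A.mulVec (x σ) i| ^ p := by
            rw [Finset.sum_comm]
            exact Finset.sum_congr rfl fun σ _ => Finset.sum_congr rfl fun i _ => (habs σ i).symm
      _ ≤ ∑ _σ : Fin n → Bool, D^p * (k:ℝ) := Finset.sum_le_sum fun σ _ => hup σ
      _ = (2:ℝ)^n * (D^p * (k:ℝ)) := by rw [Finset.sum_const, nsmul_eq_mul, hcardB]
    have step2 : ∑ i, s i ^ q ≤ D^p * (k:ℝ) := by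
      rw [← Finset.mul_sum] at step1
      exact le_of_mul_le_mul_left step1 hN2
    have step3 : (∑ i, s i) ^ q ≤ (m:ℝ)^(q-1) * (D^p * (k:ℝ)) := by
      have h4 := powmean_ge (Finset.univ : Finset (Fin m)) hmne s (fun i _ => hs0 i) q hq1
      rw [hcardm] at h4
      have h5 : (m:ℝ)^(1-q) * (∑ i, s i)^q ≤ (m:ℝ)^(1-q) * ((m:ℝ)^(q-1) * (D^p * (k:ℝ))) := by
        calc (m:ℝ)^(1-q) * (∑ i, s i)^q ≤ ∑ i, s i ^ q := h4
        _ ≤ D^p * (k:ℝ) := step2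
        _ = (m:ℝ)^(1-q) * ((m:ℝ)^(q-1) * (D^p * (k:ℝ))) := by
              rw [← mul_assoc, ← Real.rpow_add hm0]
              norm_num
      exact le_of_mul_le_mul_left h5 (Real.rpow_pos_of_pos hm0 _)
    have step4 : ∑ i, s i ≤ ((m:ℝ)^(q-1) * (D^p * (k:ℝ))) ^ (1/q) := by
      have h6 := Real.rpow_le_rpow (Real.rpow_nonneg hS0 q) step3
        (le_of_lt (by positivity : (0:ℝ) < 1/q))
      rwa [rpow_cancel_one_div hS0 hq0] at h6
    have hDp0 : (0:ℝ) ≤ D^p := Real.rpow_nonneg hD0 p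
    have expand : ((m:ℝ)^(q-1) * (D^p * (k:ℝ))) ^ (1/q)
        = (m:ℝ)^(1-2/p) * (D^2 * (k:ℝ)^(2/p)) := by
      rw [Real.mul_rpow (Real.rpow_nonneg hm0.le _) (by positivity),
        Real.mul_rpow hDp0 hk0.le, ← Real.rpow_mul hm0.le, ← Real.rpow_mul hD0]
      have e1 : (q-1)*(1/q) = 1 - 2/p := by rw [hqdef]; field_simp <;> ring
      have e2 : p * (1/q) = 2 := by rw [hqdef]; field_simp <;> ring
      have e3 : (1:ℝ)/q = 2/p := by rw [hqdef]; field_simp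
      rw [e1, e2, e3]
      rw [show ((2:ℝ)) = ((2:ℕ):ℝ) by norm_num, Real.rpow_natCast]
    calc ∑ i, ∑ j ∈ U, (A i j)^2 = ∑ i, s i := rfl
    _ ≤ ((m:ℝ)^(q-1) * (D^p * (k:ℝ))) ^ (1/q) := step4
    _ = (m:ℝ)^(1-2/p) * (D^2 * (k:ℝ)^(2/p)) := expand
    _ = D^2 * ((k:ℝ)^(2/p) * (m:ℝ)^(1-2/p)) := by ring
    _ = D^2 * ((k:ℝ) * ((k:ℝ)/(m:ℝ))^(2/p-1)) := by rw [target_eq k m hk hm (2/p)]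
    _ = D^2 * (k:ℝ) * ((k:ℝ)/(m:ℝ))^(2/p-1) := by ring

/-- Sum-of-squares bounds for RIP matrices: if `A` is `(k,D)`-RIP-`p` then
`Σ_{i,j} A_{i,j}^2 ≥ n (k/m)^(2/p-1)` when `1 < p ≤ 2`, and
`Σ_{i,j} A_{i,j}^2 ≤ n D^2 (k/m)^(2/p-1)` when `p ≥ 2`. -/
theorem rip_sum_of_squares (m n k : ℕ) (hk : 1 ≤ k) (hkn : k ≤ n) (hm : 1 ≤ m)
    (p D : ℝ) (hp : 1 ≤ p) (hD : 1 < D)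
    (A : Matrix (Fin m) (Fin n) ℝ)
    (hRIP : ∀ x : Fin n → ℝ, Set.ncard {i | x i ≠ 0} ≤ k →
      (∑ i, |x i| ^ p) ^ (1 / p) ≤ (∑ i, |A.mulVec x i| ^ p) ^ (1 / p) ∧
      (∑ i, |A.mulVec x i| ^ p) ^ (1 / p) ≤ D * (∑ i, |x i| ^ p) ^ (1 / p)) :
    (1 < p → p ≤ 2 →
      (n : ℝ) * ((k : ℝ) / (m : ℝ)) ^ (2 / p - 1) ≤ ∑ i, ∑ j, (A i j) ^ 2) ∧
    (2 ≤ p →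
      ∑ i, ∑ j, (A i j) ^ 2 ≤ (n : ℝ) * D ^ 2 * ((k : ℝ) / (m : ℝ)) ^ (2 / p - 1)) := by
  haveI : NeZero n := ⟨by omega⟩
  have hk0 : (0:ℝ) < (k:ℝ) := by exact_mod_cast hk
  -- the windows
  set W : Fin n → Finset (Fin n) :=
    fun t => Finset.image (fun c : Fin k => t + Fin.castLE hkn c) Finset.univ with hWdef
  have hinj : ∀ t : Fin n, Function.Injective (fun c : Fin k => t + Fin.castLE hkn c) :=
    fun t a b h => Fin.castLE_injective hkn (add_left_cancel h)
  have hWcard : ∀ t, (W t).card = k := by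
    intro t
    rw [hWdef]
    rw [Finset.card_image_of_injective _ (hinj t)]
    simp
  -- averaging identity for any g
  have havg : ∀ g : Fin n → ℝ, ∑ t : Fin n, ∑ j ∈ W t, g j = (k:ℝ) * ∑ j, g j := by
    intro g
    have h1 : ∀ t, ∑ j ∈ W t, g j = ∑ c : Fin k, g (t + Fin.castLE hkn c) := by
      intro t
      rw [hWdef]
      exact Finset.sum_image fun a _ b _ h => hinj t h
    rw [Finset.sum_congr rfl fun t _ => h1 t, Finset.sum_comm]
    have h2 : ∀ c : Fin k, ∑ t : Fin n, g (t + Fin.castLE hkn c) = ∑ j, g j :=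
      fun c => Equiv.sum_comp (Equiv.addRight (Fin.castLE hkn c)) g
    rw [Finset.sum_congr rfl fun c _ => h2 c, Finset.sum_const]
    simp [mul_comm]
  have hsb := fun t => subset_bounds m n k hk hm p D hp hD A hRIP (W t) (hWcard t)
  -- column sums
  set g : Fin n → ℝ := fun j => ∑ i, (A i j)^2 with hgdef
  have hswap : ∀ U : Finset (Fin n), ∑ i, ∑ j ∈ U, (A i j)^2 = ∑ j ∈ U, g j :=
    fun U => Finset.sum_comm
  have htot : ∑ i, ∑ j, (A i j)^2 = ∑ j, g j := Finset.sum_comm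
  constructor
  · intro hp1 hp2
    have per : ∀ t, (k:ℝ) * ((k:ℝ)/(m:ℝ))^(2/p - 1) ≤ ∑ j ∈ W t, g j := by
      intro t
      rw [← hswap]
      exact (hsb t).1 hp1 hp2
    have hsum : (n:ℝ) * ((k:ℝ) * ((k:ℝ)/(m:ℝ))^(2/p - 1)) ≤ (k:ℝ) * ∑ j, g j := by
      calc (n:ℝ) * ((k:ℝ) * ((k:ℝ)/(m:ℝ))^(2/p - 1))
          = ∑ _t : Fin n, (k:ℝ) * ((k:ℝ)/(m:ℝ))^(2/p - 1) := by
            rw [Finset.sum_const, nsmul_eq_mul]; simp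
      _ ≤ ∑ t : Fin n, ∑ j ∈ W t, g j := Finset.sum_le_sum fun t _ => per t
      _ = (k:ℝ) * ∑ j, g j := havg g
    rw [htot]
    have : (k:ℝ) * ((n:ℝ) * ((k:ℝ)/(m:ℝ))^(2/p - 1)) ≤ (k:ℝ) * ∑ j, g j := by
      calc (k:ℝ) * ((n:ℝ) * ((k:ℝ)/(m:ℝ))^(2/p - 1))
          = (n:ℝ) * ((k:ℝ) * ((k:ℝ)/(m:ℝ))^(2/p - 1)) := by ring
      _ ≤ (k:ℝ) * ∑ j, g j := hsum
    exact le_of_mul_le_mul_left this hk0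
  · intro hp2
    have per : ∀ t, ∑ j ∈ W t, g j ≤ D^2 * (k:ℝ) * ((k:ℝ)/(m:ℝ))^(2/p - 1) := by
      intro t
      rw [← hswap]
      exact (hsb t).2 hp2
    have hsum : (k:ℝ) * ∑ j, g j ≤ (n:ℝ) * (D^2 * (k:ℝ) * ((k:ℝ)/(m:ℝ))^(2/p - 1)) := by
      calc (k:ℝ) * ∑ j, g j = ∑ t : Fin n, ∑ j ∈ W t, g j := (havg g).symm
      _ ≤ ∑ _t : Fin n, D^2 * (k:ℝ) * ((k:ℝ)/(m:ℝ))^(2/p - 1) :=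
            Finset.sum_le_sum fun t _ => per t
      _ = (n:ℝ) * (D^2 * (k:ℝ) * ((k:ℝ)/(m:ℝ))^(2/p - 1)) := by
            rw [Finset.sum_const, nsmul_eq_mul]; simp
    rw [htot]
    have h2 : (k:ℝ) * ∑ j, g j ≤ (k:ℝ) * ((n:ℝ) * D^2 * ((k:ℝ)/(m:ℝ))^(2/p - 1)) := by
      calc (k:ℝ) * ∑ j, g j ≤ (n:ℝ) * (D^2 * (k:ℝ) * ((k:ℝ)/(m:ℝ))^(2/p - 1)) := hsum
      _ = (k:ℝ) * ((n:ℝ) * D^2 * ((k:ℝ)/(m:ℝ))^(2/p - 1)) := by ring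
    exact le_of_mul_le_mul_left h2 hk0
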